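/- Let A be an n×n real symmetric matrix, B an n×n real symmetric positive definite matrix, and u ∈ ℝⁿ a nonzero vector with uᵀABu ≠ 0. Define θ = (uᵀABu)/(uᵀB²u), θ̃ = (uᵀA²u)/(uᵀABu), and α = [uᵀA²u − uᵀB²u + √((uᵀA²u − uᵀB²u)² + 4(uᵀABu)²)]/(2uᵀABu). Then α satisfies the quadratic equation (uᵀABu)·α² + (uᵀB²u − uᵀA²u)·α − uᵀABu = 0 with α·(uᵀABu) > 0, and moreover θ ≤ α ≤ θ̃ if uᵀABu > 0, while θ̃ ≤ α ≤ θ if uᵀABu < 0. -/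

import Mathlib

open Matrix

lemma scalar_key (a b c : ℝ) (ha : 0 ≤ a) (hb : 0 < b) (hc : c ≠ 0)
    (hcs : c ^ 2 ≤ a * b) (α : ℝ)
    (hα : α = (a - b + Real.sqrt ((a - b) ^ 2 + 4 * c ^ 2)) / (2 * c)) :
    c * α ^ 2 + (b - a) * α - c = 0 ∧ α * c > 0 ∧
      (0 < c → c / b ≤ α ∧ α ≤ a / c) ∧ (c < 0 → a / c ≤ α ∧ α ≤ c / b) := by
  set s := Real.sqrt ((a - b) ^ 2 + 4 * c ^ 2) with hs
  have hs0 : 0 ≤ s := Real.sqrt_nonneg _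
  have hs2 : s ^ 2 = (a - b) ^ 2 + 4 * c ^ 2 := Real.sq_sqrt (by positivity)
  have hc2 : (0:ℝ) < c ^ 2 := by positivity
  have hsd : |a - b| < s := by
    have : |a - b| ^ 2 < s ^ 2 := by rw [sq_abs, hs2]; nlinarith
    exact lt_of_pow_lt_pow_left₀ 2 hs0 this
  have hds : 0 < a - b + s := by
    have := neg_abs_le (a - b); linarith
  have hαc : α * c = (a - b + s) / 2 := by rw [hα]; field_simp
  have hpos : α * c > 0 := by rw [hαc]; positivity
  have hq : c * α ^ 2 + (b - a) * α - c = 0 := by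
    rw [hα]; field_simp; nlinarith [hs2]
  have hK : 2 * c ^ 2 ≤ b * (a - b + s) := by
    nlinarith [mul_nonneg hb.le hs0, sq_nonneg (b * s + b * (a - b) - 2 * c ^ 2), hs2]
  refine ⟨hq, hpos, fun hcp => ?_, fun hcn => ?_⟩
  · have hα0 : 0 < α := by nlinarith
    have h1 : c ≤ α * b := by nlinarith [hK, hαc]
    constructor
    · rw [div_le_iff₀ hb]; exact h1
    · rw [le_div_iff₀ hcp]; nlinarith [hq, hα0, h1]
  · have hα0 : α < 0 := by nlinarith
    have h1 : α * b ≤ c := by nlinarith [hK, hαc]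
    constructor
    · rw [div_le_iff_of_neg hcn]; nlinarith [hq, hα0, h1]
    · rw [le_div_iff₀ hb]; exact h1

/-- For symmetric `A`, SPD `B`, and nonzero `u` with `uᵀABu ≠ 0`, the
generalized homogeneous Rayleigh quotient `α` satisfies the quadratic equation
`(uᵀABu)α² + (uᵀB²u − uᵀA²u)α − uᵀABu = 0` with `α·(uᵀABu) > 0`, and lies between the
generalized Rayleigh quotient `θ = uᵀABu/uᵀB²u` and the generalized harmonic Rayleigh
quotient `θ̃ = uᵀA²u/uᵀABu`: `θ ≤ α ≤ θ̃` if `uᵀABu > 0`, `θ̃ ≤ α ≤ θ` if `uᵀABu < 0`. -/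
theorem gen_homogeneous_rq_quadratic_and_between
    {n : ℕ} (A B : Matrix (Fin n) (Fin n) ℝ) (hA : A.IsSymm) (hB : B.PosDef)
    (u : Fin n → ℝ) (hu : u ≠ 0) (huABu : u ⬝ᵥ (A * B).mulVec u ≠ 0)
    (θ θt α : ℝ)
    (hθ : θ = (u ⬝ᵥ (A * B).mulVec u) / (u ⬝ᵥ (B * B).mulVec u))
    (hθt : θt = (u ⬝ᵥ (A * A).mulVec u) / (u ⬝ᵥ (A * B).mulVec u))
    (hα : α = (u ⬝ᵥ (A * A).mulVec u - u ⬝ᵥ (B * B).mulVec u +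
      Real.sqrt ((u ⬝ᵥ (A * A).mulVec u - u ⬝ᵥ (B * B).mulVec u)^2 +
        4 * (u ⬝ᵥ (A * B).mulVec u)^2)) / (2 * (u ⬝ᵥ (A * B).mulVec u))) :
    (u ⬝ᵥ (A * B).mulVec u) * α^2 +
      (u ⬝ᵥ (B * B).mulVec u - u ⬝ᵥ (A * A).mulVec u) * α - u ⬝ᵥ (A * B).mulVec u = 0 ∧
    α * (u ⬝ᵥ (A * B).mulVec u) > 0 ∧
    (0 < u ⬝ᵥ (A * B).mulVec u → θ ≤ α ∧ α ≤ θt) ∧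
    (u ⬝ᵥ (A * B).mulVec u < 0 → θt ≤ α ∧ α ≤ θ) := by
  set v := A.mulVec u with hv
  set w := B.mulVec u with hw
  have key : ∀ M : Matrix (Fin n) (Fin n) ℝ, M.IsSymm →
      ∀ N : Matrix (Fin n) (Fin n) ℝ, u ⬝ᵥ (M * N).mulVec u = M.mulVec u ⬝ᵥ N.mulVec u := by
    intro M hM N
    rw [← Matrix.mulVec_mulVec, Matrix.dotProduct_mulVec, ← Matrix.mulVec_transpose, hM.eq]
  have hBsymm : B.IsSymm := by
    have h := hB.1
    rwa [Matrix.IsHermitian, Matrix.conjTranspose_eq_transpose_of_trivial] at h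
  have ha2 : u ⬝ᵥ (A * A).mulVec u = v ⬝ᵥ v := key A hA A
  have hb2 : u ⬝ᵥ (B * B).mulVec u = w ⬝ᵥ w := key B hBsymm B
  have hab : u ⬝ᵥ (A * B).mulVec u = v ⬝ᵥ w := key A hA B
  have ha : 0 ≤ v ⬝ᵥ v := Finset.sum_nonneg fun i _ => mul_self_nonneg _
  have hwne : w ≠ 0 := by
    intro h
    have h1 : 0 < u ⬝ᵥ B.mulVec u := by simpa using hB.dotProduct_mulVec_pos hu
    rw [← hw, h, dotProduct_zero] at h1
    exact lt_irrefl _ h1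
  have hb : 0 < w ⬝ᵥ w := by
    have h0 : 0 ≤ w ⬝ᵥ w := Finset.sum_nonneg fun i _ => mul_self_nonneg _
    rcases h0.lt_or_eq with h | h
    · exact h
    · exact absurd (dotProduct_self_eq_zero.mp h.symm) hwne
  have hc : v ⬝ᵥ w ≠ 0 := by rwa [hab] at huABu
  have hcs : (v ⬝ᵥ w) ^ 2 ≤ (v ⬝ᵥ v) * (w ⬝ᵥ w) := by
    simp only [dotProduct]
    calc (∑ i, v i * w i) ^ 2 ≤ (∑ i, v i ^ 2) * (∑ i, w i ^ 2) :=
          Finset.sum_mul_sq_le_sq_mul_sq _ _ _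
      _ = (∑ i, v i * v i) * (∑ i, w i * w i) := by simp [sq]
  rw [hab, hb2] at hθ
  rw [ha2, hab] at hθt
  rw [ha2, hb2, hab] at hα ⊢
  have := scalar_key (v ⬝ᵥ v) (w ⬝ᵥ w) (v ⬝ᵥ w) ha hb hc hcs α hα
  rw [hθ, hθt]
  exact ⟨this.1, this.2.1, this.2.2.1, fun h => ⟨(this.2.2.2 h).1, (this.2.2.2 h).2⟩⟩
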